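/- For every n ≥ 1, the reduced type-B Birman–Murakami–Wenzl algebra BB_n(R) admits an involutive R-algebra anti-automorphism fixing each generator X_1, …, X_{n−1} and Y; equivalently, there is an R-algebra isomorphism from BB_n(R) to its opposite algebra BB_n(R)^{op} sending each generator to itself, whose square is the identity. -/

import Mathlib

namespace BMWB

inductive Gen (n : ℕ) : Type
  | X : Fin (n - 1) → Gen n
  | Xinv : Fin (n - 1) → Gen n
  | Y : 0 < n → Gen n
  | Yinv : 0 < n → Gen n

variable (R : Type) [CommRing R]

def fX {n : ℕ} (i : Fin (n - 1)) : FreeAlgebra R (Gen n) := FreeAlgebra.ι R (Gen.X i)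
def fXinv {n : ℕ} (i : Fin (n - 1)) : FreeAlgebra R (Gen n) := FreeAlgebra.ι R (Gen.Xinv i)
def fY {n : ℕ} (h : 0 < n) : FreeAlgebra R (Gen n) := FreeAlgebra.ι R (Gen.Y h)
def fYinv {n : ℕ} (h : 0 < n) : FreeAlgebra R (Gen n) := FreeAlgebra.ι R (Gen.Yinv h)
def fe {n : ℕ} (deli : R) (i : Fin (n - 1)) : FreeAlgebra R (Gen n) :=
  1 - deli • (fX R i - fXinv R i)

variable (lam lami deli q0 q1 A : R) (n : ℕ)

/-- The defining relations of the reduced Birman-Murakami-Wenzl algebra of Coxeter type B. -/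
inductive Rel : FreeAlgebra R (Gen n) → FreeAlgebra R (Gen n) → Prop
  | XXinv (i : Fin (n - 1)) : Rel (fX R i * fXinv R i) 1
  | XinvX (i : Fin (n - 1)) : Rel (fXinv R i * fX R i) 1
  | YYinv (h : 0 < n) : Rel (fY R h * fYinv R h) 1
  | YinvY (h : 0 < n) : Rel (fYinv R h * fY R h) 1
  | comm (i j : Fin (n - 1)) (h : (j : ℕ) + 1 < (i : ℕ)) :
      Rel (fX R i * fX R j) (fX R j * fX R i)
  | braid (i j : Fin (n - 1)) (h : (i : ℕ) + 1 = (j : ℕ)) :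
      Rel (fX R i * fX R j * fX R i) (fX R j * fX R i * fX R j)
  | Xe (i : Fin (n - 1)) : Rel (fX R i * fe R deli i) (lam • fe R deli i)
  | eX (i : Fin (n - 1)) : Rel (fe R deli i * fX R i) (lam • fe R deli i)
  | eXe (i j : Fin (n - 1)) (h : (j : ℕ) + 1 = (i : ℕ)) :
      Rel (fe R deli i * fX R j * fe R deli i) (lami • fe R deli i)
  | eXinve (i j : Fin (n - 1)) (h : (j : ℕ) + 1 = (i : ℕ)) :
      Rel (fe R deli i * fXinv R j * fe R deli i) (lam • fe R deli i)
  | bYXYX (h : 0 < n) (i : Fin (n - 1)) (hi : (i : ℕ) = 0) :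
      Rel (fX R i * fY R h * fX R i * fY R h) (fY R h * fX R i * fY R h * fX R i)
  | Ysq (h : 0 < n) : Rel (fY R h * fY R h) (q1 • fY R h + q0 • (1 : FreeAlgebra R (Gen n)))
  | YXYe (h : 0 < n) (i : Fin (n - 1)) (hi : (i : ℕ) = 0) :
      Rel (fY R h * fX R i * fY R h * fe R deli i) (fe R deli i)
  | Ycomm (h : 0 < n) (i : Fin (n - 1)) (hi : 0 < (i : ℕ)) :
      Rel (fY R h * fX R i) (fX R i * fY R h)
  | eYe (h : 0 < n) (i : Fin (n - 1)) (hi : (i : ℕ) = 0) :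
      Rel (fe R deli i * fY R h * fe R deli i) (A • fe R deli i)

/-- The reduced Birman-Murakami-Wenzl algebra of Coxeter type B, `BB_n(R)`,
presented by generators and relations. -/
abbrev BB : Type := RingQuot (Rel R lam lami deli q0 q1 A n)

noncomputable def mk : FreeAlgebra R (Gen n) →ₐ[R] BB R lam lami deli q0 q1 A n :=
  RingQuot.mkAlgHom R (Rel R lam lami deli q0 q1 A n)

/-- The generator `Y` (junk value `1` if `n = 0`). -/
noncomputable def YY : BB R lam lami deli q0 q1 A n :=
  if h : 0 < n then mk R lam lami deli q0 q1 A n (fY R h) else 1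

/-- The inverse of the generator `Y`. -/
noncomputable def YYi : BB R lam lami deli q0 q1 A n :=
  if h : 0 < n then mk R lam lami deli q0 q1 A n (fYinv R h) else 1

/-- The generator `X_i`, `1 ≤ i ≤ n-1` (junk value `1` out of range). -/
noncomputable def XX (i : ℕ) : BB R lam lami deli q0 q1 A n :=
  if h : i - 1 < n - 1 then mk R lam lami deli q0 q1 A n (fX R ⟨i - 1, h⟩) else 1

/-- The inverse `X_i⁻¹`. -/
noncomputable def XXi (i : ℕ) : BB R lam lami deli q0 q1 A n :=
  if h : i - 1 < n - 1 then mk R lam lami deli q0 q1 A n (fXinv R ⟨i - 1, h⟩) else 1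

/-- The element `e_i := 1 - δ⁻¹ (X_i - X_i⁻¹)`. -/
noncomputable def ee (i : ℕ) : BB R lam lami deli q0 q1 A n :=
  1 - deli • (XX R lam lami deli q0 q1 A n i - XXi R lam lami deli q0 q1 A n i)

/-- `Y_i := X_{i-1} ⋯ X_1 Y X_1⁻¹ ⋯ X_{i-1}⁻¹`. -/
noncomputable def Yn : ℕ → BB R lam lami deli q0 q1 A n
  | 0 => 1
  | 1 => YY R lam lami deli q0 q1 A n
  | (k + 2) => XX R lam lami deli q0 q1 A n (k + 1) * Yn (k + 1) * XXi R lam lami deli q0 q1 A n (k + 1)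

/-- `Y'_i := X_{i-1} ⋯ X_1 Y X_1 ⋯ X_{i-1}`. -/
noncomputable def Yp : ℕ → BB R lam lami deli q0 q1 A n
  | 0 => 1
  | 1 => YY R lam lami deli q0 q1 A n
  | (k + 2) => XX R lam lami deli q0 q1 A n (k + 1) * Yp (k + 1) * XX R lam lami deli q0 q1 A n (k + 1)

/-- The inverse of `Y'_i`. -/
noncomputable def Ypi : ℕ → BB R lam lami deli q0 q1 A n
  | 0 => 1
  | 1 => YYi R lam lami deli q0 q1 A n
  | (k + 2) => XXi R lam lami deli q0 q1 A n (k + 1) * Ypi (k + 1) * XXi R lam lami deli q0 q1 A n (k + 1)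

/-- The set of the images of the generators (and their inverses) of `BB_{m+1}` inside `BB_n`.
Its `Algebra.adjoin` is the image of the canonical algebra homomorphism `BB_{m+1} → BB_n`. -/
noncomputable def genSet (m : ℕ) : Set (BB R lam lami deli q0 q1 A n) :=
  {a | a = YY R lam lami deli q0 q1 A n ∨ a = YYi R lam lami deli q0 q1 A n ∨
    ∃ i, 1 ≤ i ∧ i ≤ m ∧ (a = XX R lam lami deli q0 q1 A n i ∨ a = XXi R lam lami deli q0 q1 A n i)}

/-- The image of the canonical algebra homomorphism `BB_{m+1}(R) → BB_n(R)`, realized as the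
subalgebra generated by the images of the generators `Y, Y⁻¹, X_1, …, X_m` (and inverses). -/
noncomputable def sub (m : ℕ) : Subalgebra R (BB R lam lami deli q0 q1 A n) :=
  Algebra.adjoin R (genSet R lam lami deli q0 q1 A n m)

/-- `X(i,j) = X_i X_{i+1} ⋯ X_j`. -/
noncomputable def Xprod (i j : ℕ) : BB R lam lami deli q0 q1 A n :=
  ((List.range (j + 1 - i)).map (fun k => XX R lam lami deli q0 q1 A n (i + k))).prod

/-- `E(i,j) = e_i e_{i+2} ⋯ e_j`. -/
noncomputable def Eprod (i j : ℕ) : BB R lam lami deli q0 q1 A n :=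
  ((List.range ((j - i) / 2 + 1)).map (fun k => ee R lam lami deli q0 q1 A n (i + 2 * k))).prod

/-- `H_1 = e_1`, `H_{m+1} = e_{m+1} X(m+2, 2m+1) X(m+1, 2m) H_m`. -/
noncomputable def H : ℕ → BB R lam lami deli q0 q1 A n
  | 0 => 1
  | 1 => ee R lam lami deli q0 q1 A n 1
  | (k + 2) => ee R lam lami deli q0 q1 A n (k + 2) *
      Xprod R lam lami deli q0 q1 A n (k + 3) (2 * k + 3) *
      Xprod R lam lami deli q0 q1 A n (k + 2) (2 * k + 2) * H (k + 1)


open MulOpposite in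
noncomputable def Fop : FreeAlgebra R (Gen n) →ₐ[R] (BB R lam lami deli q0 q1 A n)ᵐᵒᵖ :=
  FreeAlgebra.lift R fun g => op (mk R lam lami deli q0 q1 A n (FreeAlgebra.ι R g))

lemma Fop_iota (g : Gen n) :
    Fop R lam lami deli q0 q1 A n (FreeAlgebra.ι R g)
      = MulOpposite.op (mk R lam lami deli q0 q1 A n (FreeAlgebra.ι R g)) := by
  simp [Fop]

lemma Fop_fe (i : Fin (n - 1)) :
    Fop R lam lami deli q0 q1 A n (fe R deli i)
      = MulOpposite.op (mk R lam lami deli q0 q1 A n (fe R deli i)) := by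
  simp only [fe, fX, fXinv, map_sub, map_smul, map_one, Fop_iota,
    MulOpposite.op_sub, MulOpposite.op_smul, MulOpposite.op_one]

lemma mk_rel {a b : FreeAlgebra R (Gen n)} (h : Rel R lam lami deli q0 q1 A n a b) :
    mk R lam lami deli q0 q1 A n a = mk R lam lami deli q0 q1 A n b :=
  RingQuot.mkAlgHom_rel R h

lemma derived_eYXY (h : 0 < n) (i : Fin (n - 1)) (hi : (i : ℕ) = 0) :
    mk R lam lami deli q0 q1 A n (fe R deli i) * mk R lam lami deli q0 q1 A n (fY R h) *
      mk R lam lami deli q0 q1 A n (fX R i) * mk R lam lami deli q0 q1 A n (fY R h)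
      = mk R lam lami deli q0 q1 A n (fe R deli i) := by
  set m := mk R lam lami deli q0 q1 A n with hm
  set X := m (fX R i) with hX
  set Xi := m (fXinv R i) with hXi
  set Y := m (fY R h) with hY
  set E := m (fe R deli i) with hEdef
  have hXXi : X * Xi = 1 := by
    have := mk_rel R lam lami deli q0 q1 A n (Rel.XXinv i)
    rw [map_mul] at this; simpa [← hm, ← hX, ← hXi] using this
  have hXiX : Xi * X = 1 := by
    have := mk_rel R lam lami deli q0 q1 A n (Rel.XinvX i)
    rw [map_mul] at this; simpa [← hm, ← hX, ← hXi] using this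
  have hb : X * Y * X * Y = Y * X * Y * X := by
    have := mk_rel R lam lami deli q0 q1 A n (Rel.bYXYX h i hi)
    simpa only [map_mul, ← hm, ← hX, ← hY] using this
  have h1 : Y * X * Y * E = E := by
    have := mk_rel R lam lami deli q0 q1 A n (Rel.YXYe h i hi)
    simpa only [map_mul, ← hm, ← hX, ← hY, ← hEdef] using this
  set Z := Y * X * Y with hZ
  have hXZ : X * Z = Z * X := by
    rw [hZ, ← mul_assoc, ← mul_assoc]; exact hb
  have hXiZ : Xi * Z = Z * Xi := by
    calc Xi * Z = (Xi * Z) * (X * Xi) := by rw [hXXi, mul_one]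
      _ = (Xi * (Z * X)) * Xi := by rw [← mul_assoc, mul_assoc Xi Z X]
      _ = (Xi * (X * Z)) * Xi := by rw [hXZ]
      _ = ((Xi * X) * Z) * Xi := by rw [← mul_assoc Xi X Z]
      _ = Z * Xi := by rw [hXiX, one_mul]
  have hE : E = 1 - deli • (X - Xi) := by
    rw [hEdef, hm, fe, map_sub, map_smul, map_sub, map_one]
  have hcomm : E * Z = Z * E := by
    rw [hE]
    simp only [sub_mul, mul_sub, smul_mul_assoc, mul_smul_comm, one_mul, mul_one,
      hXZ, hXiZ]
  have : E * Y * X * Y = E * Z := by rw [hZ]; simp only [mul_assoc]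
  rw [this, hcomm, h1]

lemma Fop_rel {a b : FreeAlgebra R (Gen n)} (h : Rel R lam lami deli q0 q1 A n a b) :
    Fop R lam lami deli q0 q1 A n a = Fop R lam lami deli q0 q1 A n b := by
  induction h with
  | XXinv i =>
      simp only [fX, fXinv, map_mul, map_one, Fop_iota, ← MulOpposite.op_mul,
        ← MulOpposite.op_one]
      congr 1
      simpa [map_mul, fX, fXinv] using mk_rel R lam lami deli q0 q1 A n (Rel.XinvX i)
  | XinvX i =>
      simp only [fX, fXinv, map_mul, map_one, Fop_iota, ← MulOpposite.op_mul,
        ← MulOpposite.op_one]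
      congr 1
      simpa [map_mul, fX, fXinv] using mk_rel R lam lami deli q0 q1 A n (Rel.XXinv i)
  | YYinv h =>
      simp only [fY, fYinv, map_mul, map_one, Fop_iota, ← MulOpposite.op_mul,
        ← MulOpposite.op_one]
      congr 1
      simpa [map_mul, fY, fYinv] using mk_rel R lam lami deli q0 q1 A n (Rel.YinvY h)
  | YinvY h =>
      simp only [fY, fYinv, map_mul, map_one, Fop_iota, ← MulOpposite.op_mul,
        ← MulOpposite.op_one]
      congr 1
      simpa [map_mul, fY, fYinv] using mk_rel R lam lami deli q0 q1 A n (Rel.YYinv h)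
  | comm i j hij =>
      simp only [fX, map_mul, Fop_iota, ← MulOpposite.op_mul]
      congr 1
      simpa [map_mul, fX] using (mk_rel R lam lami deli q0 q1 A n (Rel.comm i j hij)).symm
  | braid i j hij =>
      simp only [fX, map_mul, Fop_iota, ← MulOpposite.op_mul]
      congr 1
      simpa [map_mul, mul_assoc, fX] using
        mk_rel R lam lami deli q0 q1 A n (Rel.braid i j hij)
  | Xe i =>
      simp only [map_mul, map_smul, Fop_iota, Fop_fe, fX, ← MulOpposite.op_mul,
        ← MulOpposite.op_smul]
      congr 1
      simpa [map_mul, map_smul, fX] using mk_rel R lam lami deli q0 q1 A n (Rel.eX i)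
  | eX i =>
      simp only [map_mul, map_smul, Fop_iota, Fop_fe, fX, ← MulOpposite.op_mul,
        ← MulOpposite.op_smul]
      congr 1
      simpa [map_mul, map_smul, fX] using mk_rel R lam lami deli q0 q1 A n (Rel.Xe i)
  | eXe i j hij =>
      simp only [map_mul, map_smul, Fop_iota, Fop_fe, fX, ← MulOpposite.op_mul,
        ← MulOpposite.op_smul]
      congr 1
      simpa [map_mul, map_smul, mul_assoc, fX] using
        mk_rel R lam lami deli q0 q1 A n (Rel.eXe i j hij)
  | eXinve i j hij =>
      simp only [map_mul, map_smul, Fop_iota, Fop_fe, fXinv, ← MulOpposite.op_mul,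
        ← MulOpposite.op_smul]
      congr 1
      simpa [map_mul, map_smul, mul_assoc, fXinv] using
        mk_rel R lam lami deli q0 q1 A n (Rel.eXinve i j hij)
  | bYXYX h i hi =>
      simp only [fX, fY, map_mul, Fop_iota, ← MulOpposite.op_mul]
      congr 1
      simpa [fX, fY, map_mul, mul_assoc] using
        (mk_rel R lam lami deli q0 q1 A n (Rel.bYXYX h i hi)).symm
  | Ysq h =>
      simp only [fY, map_mul, map_add, map_smul, map_one, Fop_iota,
        ← MulOpposite.op_mul, ← MulOpposite.op_smul, ← MulOpposite.op_one,
        ← MulOpposite.op_add]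
      congr 1
      simpa [map_mul, map_add, map_smul, fY] using
        mk_rel R lam lami deli q0 q1 A n (Rel.Ysq h)
  | YXYe h i hi =>
      simp only [fX, fY, map_mul, Fop_iota, Fop_fe, ← MulOpposite.op_mul]
      congr 1
      simpa [mul_assoc, fX, fY] using derived_eYXY R lam lami deli q0 q1 A n h i hi
  | Ycomm h i hi =>
      simp only [fX, fY, map_mul, Fop_iota, ← MulOpposite.op_mul]
      congr 1
      simpa [map_mul, fX, fY] using (mk_rel R lam lami deli q0 q1 A n (Rel.Ycomm h i hi)).symm
  | eYe h i hi =>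
      simp only [fY, map_mul, map_smul, Fop_iota, Fop_fe, ← MulOpposite.op_mul,
        ← MulOpposite.op_smul]
      congr 1
      simpa [map_mul, map_smul, mul_assoc, fY] using
        mk_rel R lam lami deli q0 q1 A n (Rel.eYe h i hi)

noncomputable def rho : BB R lam lami deli q0 q1 A n →ₐ[R] (BB R lam lami deli q0 q1 A n)ᵐᵒᵖ :=
  RingQuot.liftAlgHom R ⟨Fop R lam lami deli q0 q1 A n,
    fun _ _ h => Fop_rel R lam lami deli q0 q1 A n h⟩

lemma rho_mk (y : FreeAlgebra R (Gen n)) :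
    rho R lam lami deli q0 q1 A n (mk R lam lami deli q0 q1 A n y)
      = Fop R lam lami deli q0 q1 A n y :=
  RingQuot.liftAlgHom_mkAlgHom_apply _ _ _ _

/-- Remark 6: `BB_n(R)` has an involutive `R`-algebra anti-automorphism fixing all generators,
i.e. an algebra homomorphism to the opposite algebra fixing each `X_i` and `Y` whose square
is the identity. -/
theorem BB_involution (R : Type) [CommRing R] [IsDomain R]
    (q qi lam lami del deli q0 q0i q1 A x : R)
    (hq : q * qi = 1) (hlam : lam * lami = 1) (hdel : del * deli = 1) (hq0u : q0 * q0i = 1)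
    (hdelta : del = q - qi) (hx : x * del = del - lam + lami) (n : ℕ) :
    ∃ ρ : BB R lam lami deli q0 q1 A n →ₐ[R] (BB R lam lami deli q0 q1 A n)ᵐᵒᵖ,
      (∀ i, 1 ≤ i → i ≤ n - 1 → ρ (XX R lam lami deli q0 q1 A n i) = MulOpposite.op (XX R lam lami deli q0 q1 A n i)) ∧
      ρ (YY R lam lami deli q0 q1 A n) = MulOpposite.op (YY R lam lami deli q0 q1 A n) ∧
      (∀ a, (ρ ((ρ a).unop)).unop = a) := by
  refine ⟨rho R lam lami deli q0 q1 A n, ?_, ?_, ?_⟩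
  · intro i _ _
    simp only [XX]
    split_ifs with h
    · rw [rho_mk, fX, Fop_iota]
    · simp
  · simp only [YY]
    split_ifs with h
    · rw [rho_mk, fY, Fop_iota]
    · simp
  · intro a
    obtain ⟨y, rfl⟩ := RingQuot.mkAlgHom_surjective R (Rel R lam lami deli q0 q1 A n) a
    have hmk : ∀ z, RingQuot.mkAlgHom R (Rel R lam lami deli q0 q1 A n) z
        = mk R lam lami deli q0 q1 A n z := fun _ => rfl
    rw [hmk]
    induction y using FreeAlgebra.induction with
    | grade0 r => simp
    | grade1 g =>
        rw [rho_mk, Fop_iota, MulOpposite.unop_op, rho_mk, Fop_iota, MulOpposite.unop_op]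
    | mul a b ha hb =>
        rw [map_mul, map_mul, MulOpposite.unop_mul, map_mul, MulOpposite.unop_mul, ha, hb]
    | add a b ha hb =>
        rw [map_add, map_add, MulOpposite.unop_add, map_add, MulOpposite.unop_add, ha, hb]

end BMWB
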